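/- Two-object formation criterion: consider leader dynamics ẋ₁ = A₁x₁ + B₁u₁(t) and follower dynamics ẋ₂ = A₂x₂ + B₂u₂ with affine feedback u₂(x₁,x₂) = Sx₂ + Kx₁ + k. If (A₂,B₂) is stabilizable (there is S with A₂ + B₂S Hurwitz), and there exist N ∈ ℝ^{m×n}, k̃ ∈ ℝ^m with B₂N = A₁ − A₂ and B₂k̃ = A₂d, then choosing K = N − S and k = k̃ + S d, there are constants C, α > 0 and β > 0 such that for every continuous u₁ and all initial conditions, the error z(t) = x₂(t) − x₁(t) + d satisfies ‖z(t)‖ ≤ C e^{−αt}‖z(0)‖ + β sup_{τ∈[0,t]} ‖u₁(τ)‖. -/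

import Mathlib

open scoped Matrix.Norms.L2Operator
open NormedSpace

section FormationAux

variable {E : Type*} [NormedAddCommGroup E] [NormedSpace ℂ E] [FiniteDimensional ℂ E]

noncomputable instance clmRatAlg : NormedAlgebra ℚ (E →L[ℂ] E) :=
  NormedAlgebra.restrictScalars ℚ ℂ (E →L[ℂ] E)


-- exp applied to a vector, as a tsum
lemma exp_apply_tsum (f : E →L[ℂ] E) (v : E) :
    exp f v = ∑' k : ℕ, ((k.factorial : ℂ))⁻¹ • (f ^ k) v := by
  have hs : Summable fun k : ℕ => ((k.factorial : ℂ))⁻¹ • f ^ k := expSeries_summable' f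
  have := (ContinuousLinearMap.apply ℂ E v).map_tsum hs
  rw [exp_eq_tsum ℂ]
  simpa using this

lemma decay_vector (f : E →L[ℂ] E) {α : ℝ} (hα : 0 < α) (μ : ℂ) (hμ : μ.re ≤ -(2*α))
    (v : E) (k : ℕ) (hk : (((f - μ • 1) : E →L[ℂ] E) ^ k) v = 0) :
    ∃ C : ℝ, ∀ t : ℝ, 0 ≤ t → ‖exp ((t : ℂ) • f) v‖ ≤ C * Real.exp (-α * t) := by
  set g : E →L[ℂ] E := f - μ • 1 with hg
  refine ⟨∑ i ∈ Finset.range k, α⁻¹ ^ i * ‖(g ^ i) v‖, fun t ht => ?_⟩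
  have hsplit : (t : ℂ) • f = (t * μ : ℂ) • (1 : E →L[ℂ] E) + (t : ℂ) • g := by
    rw [hg, smul_sub, smul_smul]
    abel
  have hcomm : Commute ((t * μ : ℂ) • (1 : E →L[ℂ] E)) ((t : ℂ) • g) :=
    ((Commute.one_left g).smul_left _).smul_right _
  have hexp : exp ((t : ℂ) • f) = exp ((t * μ : ℂ) • (1 : E →L[ℂ] E)) * exp ((t : ℂ) • g) := by
    rw [hsplit, exp_add_of_commute hcomm]
  have halg : ((t * μ : ℂ) • (1 : E →L[ℂ] E)) = algebraMap ℂ (E →L[ℂ] E) (t * μ) :=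
    (Algebra.algebraMap_eq_smul_one _).symm
  have hexp1 : exp ((t * μ : ℂ) • (1 : E →L[ℂ] E))
      = algebraMap ℂ (E →L[ℂ] E) (Complex.exp (t * μ)) := by
    rw [halg, Complex.exp_eq_exp_ℂ, map_exp (algebraMap ℂ (E →L[ℂ] E)) (algebraMapCLM ℂ _).continuous]
  have happly : exp ((t : ℂ) • f) v = Complex.exp (t * μ) • (exp ((t : ℂ) • g) v) := by
    rw [hexp, ContinuousLinearMap.mul_apply, hexp1, Algebra.algebraMap_eq_smul_one,
      ContinuousLinearMap.smul_apply, ContinuousLinearMap.one_apply]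
  -- finite sum for the nilpotent part
  have hsum : exp ((t : ℂ) • g) v
      = ∑ i ∈ Finset.range k, ((i.factorial : ℂ))⁻¹ • (t : ℂ) ^ i • (g ^ i) v := by
    rw [exp_apply_tsum]
    have hzero : ∀ i ∉ Finset.range k, ((i.factorial : ℂ))⁻¹ • (((t : ℂ) • g) ^ i) v = 0 := by
      intro i hi
      rw [Finset.mem_range, not_lt] at hi
      have : (g ^ i) v = 0 := by
        have : g ^ i = g ^ (i - k) * g ^ k := by rw [← pow_add]; congr 1; omega
        rw [this, ContinuousLinearMap.mul_apply, hk, map_zero]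
      rw [smul_pow, ContinuousLinearMap.smul_apply, this, smul_zero, smul_zero]
    rw [tsum_eq_sum hzero]
    refine Finset.sum_congr rfl fun i _ => ?_
    rw [smul_pow, ContinuousLinearMap.smul_apply]
  have hre : ((t : ℂ) * μ).re = t * μ.re := by simp
  have hnorm : ‖exp ((t : ℂ) • f) v‖
      ≤ Real.exp (t * μ.re) * ∑ i ∈ Finset.range k, (t ^ i / i.factorial) * ‖(g ^ i) v‖ := by
    rw [happly, norm_smul, Complex.norm_exp, hre]
    refine mul_le_mul_of_nonneg_left ?_ (Real.exp_nonneg _)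
    calc ‖exp ((t : ℂ) • g) v‖
        ≤ ∑ i ∈ Finset.range k, ‖((i.factorial : ℂ))⁻¹ • (t : ℂ) ^ i • (g ^ i) v‖ := by
          rw [hsum]; exact norm_sum_le _ _
      _ ≤ ∑ i ∈ Finset.range k, (t ^ i / i.factorial) * ‖(g ^ i) v‖ := by
          refine Finset.sum_le_sum fun i _ => ?_
          rw [norm_smul, norm_smul, norm_inv, norm_pow, Complex.norm_natCast,
            Complex.norm_real, Real.norm_of_nonneg ht, ← mul_assoc, div_eq_mul_inv, mul_comm (t ^ i)]
  have key : ∀ i : ℕ, Real.exp (t * μ.re) * (t ^ i / i.factorial) ≤ α⁻¹ ^ i * Real.exp (-α * t) := by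
    intro i
    have h1 : Real.exp (t * μ.re) ≤ Real.exp (-(2*α) * t) := by
      rw [Real.exp_le_exp]
      calc t * μ.re ≤ t * (-(2*α)) := mul_le_mul_of_nonneg_left hμ ht
        _ = -(2*α) * t := mul_comm _ _
    have h2 : t ^ i / i.factorial ≤ Real.exp (α * t) * α⁻¹ ^ i := by
      have hα' : 0 ≤ α * t := mul_nonneg hα.le ht
      have h3 : (α * t) ^ i / i.factorial ≤ Real.exp (α * t) := by
        calc (α * t) ^ i / i.factorial
            ≤ ∑ j ∈ Finset.range (i + 1), (α * t) ^ j / j.factorial :=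
              Finset.single_le_sum (f := fun j => (α * t) ^ j / (j.factorial : ℝ))
                (fun j _ => by positivity) (Finset.self_mem_range_succ i)
          _ ≤ Real.exp (α * t) := Real.sum_le_exp_of_nonneg hα' _
      have h4 : t ^ i / i.factorial = ((α * t) ^ i / i.factorial) * α⁻¹ ^ i := by
        rw [mul_pow]
        field_simp
        rw [mul_assoc, ← mul_pow, mul_one_div_cancel hα.ne', one_pow, mul_one]
      rw [h4]
      exact mul_le_mul_of_nonneg_right h3 (by positivity)
    calc Real.exp (t * μ.re) * (t ^ i / i.factorial)
        ≤ Real.exp (-(2*α) * t) * (Real.exp (α * t) * α⁻¹ ^ i) := by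
          exact mul_le_mul h1 h2 (by positivity) (Real.exp_nonneg _)
      _ = α⁻¹ ^ i * Real.exp (-α * t) := by
          rw [← mul_assoc, ← Real.exp_add]
          ring_nf
  calc ‖exp ((t : ℂ) • f) v‖
      ≤ Real.exp (t * μ.re) * ∑ i ∈ Finset.range k, (t ^ i / i.factorial) * ‖(g ^ i) v‖ := hnorm
    _ = ∑ i ∈ Finset.range k, Real.exp (t * μ.re) * (t ^ i / i.factorial) * ‖(g ^ i) v‖ := by
        rw [Finset.mul_sum]; exact Finset.sum_congr rfl fun i _ => by ring
    _ ≤ ∑ i ∈ Finset.range k, α⁻¹ ^ i * Real.exp (-α * t) * ‖(g ^ i) v‖ :=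
        Finset.sum_le_sum fun i _ => mul_le_mul_of_nonneg_right (key i) (norm_nonneg _)
    _ = (∑ i ∈ Finset.range k, α⁻¹ ^ i * ‖(g ^ i) v‖) * Real.exp (-α * t) := by
        rw [Finset.sum_mul]; exact Finset.sum_congr rfl fun i _ => by ring



lemma decay_all (f : E →L[ℂ] E) {α : ℝ} (hα : 0 < α)
    (hf : ∀ μ : ℂ, Module.End.HasEigenvalue (f : Module.End ℂ E) μ → μ.re ≤ -(2*α)) :
    ∀ v : E, ∃ C : ℝ, ∀ t : ℝ, 0 ≤ t → ‖exp ((t : ℂ) • f) v‖ ≤ C * Real.exp (-α * t) := by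
  set fE : Module.End ℂ E := (f : Module.End ℂ E) with hfE
  let W : Submodule ℂ E :=
  { carrier := {v | ∃ C : ℝ, ∀ t : ℝ, 0 ≤ t → ‖exp ((t : ℂ) • f) v‖ ≤ C * Real.exp (-α * t)}
    zero_mem' := ⟨0, fun t _ => by simp⟩
    add_mem' := by
      rintro a b ⟨Ca, ha⟩ ⟨Cb, hb⟩
      refine ⟨Ca + Cb, fun t ht => ?_⟩
      calc ‖exp ((t : ℂ) • f) (a + b)‖ ≤ ‖exp ((t : ℂ) • f) a‖ + ‖exp ((t : ℂ) • f) b‖ := by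
            rw [map_add]; exact norm_add_le _ _
        _ ≤ Ca * Real.exp (-α * t) + Cb * Real.exp (-α * t) := add_le_add (ha t ht) (hb t ht)
        _ = (Ca + Cb) * Real.exp (-α * t) := by ring
    smul_mem' := by
      rintro c a ⟨Ca, ha⟩
      refine ⟨‖c‖ * Ca, fun t ht => ?_⟩
      rw [map_smul, norm_smul, mul_assoc]
      exact mul_le_mul_of_nonneg_left (ha t ht) (norm_nonneg c) }
  have hW : W = ⊤ := by
    rw [eq_top_iff, ← Module.End.iSup_maxGenEigenspace_eq_top fE]
    refine iSup_le fun μ => ?_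
    intro v hv
    rcases eq_or_ne v 0 with rfl | hv0
    · exact W.zero_mem
    · have hμ : μ.re ≤ -(2*α) := by
        apply hf
        apply Module.End.hasEigenvalue_of_hasGenEigenvalue (k := Module.finrank ℂ E)
        show fE.genEigenspace μ (Module.finrank ℂ E) ≠ ⊥
        rw [Submodule.ne_bot_iff]
        refine ⟨v, ?_, hv0⟩
        rw [← Module.End.maxGenEigenspace_eq_genEigenspace_finrank]
        exact hv
      obtain ⟨k, hk⟩ := (Module.End.mem_maxGenEigenspace fE μ v).mp hv
      have key : ∀ (j : ℕ) (w : E), ((fE - μ • 1) ^ j) w = (((f - μ • 1 : E →L[ℂ] E)) ^ j) w := by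
        intro j
        induction j with
        | zero => intro w; simp
        | succ j ih =>
          intro w
          rw [pow_succ, pow_succ, Module.End.mul_apply, ContinuousLinearMap.mul_apply, ih]
          congr 1
      have hk' : (((f - μ • 1) : E →L[ℂ] E) ^ k) v = 0 := by rw [← key]; exact hk
      exact decay_vector f hα μ hμ v k hk'
  intro v
  have : v ∈ W := hW ▸ Submodule.mem_top
  exact this

lemma decay_uniform (f : E →L[ℂ] E) {α : ℝ} (hα : 0 < α)
    (hf : ∀ μ : ℂ, Module.End.HasEigenvalue (f : Module.End ℂ E) μ → μ.re ≤ -(2*α)) :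
    ∃ C : ℝ, 0 < C ∧ ∀ (v : E) (t : ℝ), 0 ≤ t →
      ‖exp ((t : ℂ) • f) v‖ ≤ C * Real.exp (-α * t) * ‖v‖ := by
  classical
  set b := Module.finBasis ℂ E with hb
  choose C hC using fun i => decay_all f hα hf (b i)
  let φ : Fin (Module.finrank ℂ E) → (E →L[ℂ] ℂ) := fun i =>
    LinearMap.toContinuousLinearMap (b.coord i)
  refine ⟨∑ i, ‖φ i‖ * max (C i) 0 + 1, by positivity, fun v t ht => ?_⟩
  have hrepr : exp ((t : ℂ) • f) v = ∑ i, b.repr v i • exp ((t : ℂ) • f) (b i) := by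
    conv_lhs => rw [← b.sum_repr v]
    rw [map_sum]
    exact Finset.sum_congr rfl fun i _ => by rw [map_smul]
  calc ‖exp ((t : ℂ) • f) v‖ ≤ ∑ i, ‖b.repr v i • exp ((t : ℂ) • f) (b i)‖ := by
        rw [hrepr]; exact norm_sum_le _ _
    _ ≤ ∑ i, (‖φ i‖ * max (C i) 0) * (Real.exp (-α * t) * ‖v‖) := by
        refine Finset.sum_le_sum fun i _ => ?_
        rw [norm_smul]
        have h1 : ‖b.repr v i‖ ≤ ‖φ i‖ * ‖v‖ := by
          have : b.repr v i = φ i v := by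
            simp [φ, LinearMap.coe_toContinuousLinearMap', Module.Basis.coord_apply]
          rw [this]; exact (φ i).le_opNorm v
        have h2 : ‖exp ((t : ℂ) • f) (b i)‖ ≤ max (C i) 0 * Real.exp (-α * t) :=
          le_trans (hC i t ht) (mul_le_mul_of_nonneg_right (le_max_left _ _) (Real.exp_nonneg _))
        calc ‖b.repr v i‖ * ‖exp ((t : ℂ) • f) (b i)‖
            ≤ (‖φ i‖ * ‖v‖) * (max (C i) 0 * Real.exp (-α * t)) :=
              mul_le_mul h1 h2 (norm_nonneg _) (by positivity)
          _ = (‖φ i‖ * max (C i) 0) * (Real.exp (-α * t) * ‖v‖) := by ring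
    _ = (∑ i, ‖φ i‖ * max (C i) 0) * (Real.exp (-α * t) * ‖v‖) := by rw [Finset.sum_mul]
    _ ≤ (∑ i, ‖φ i‖ * max (C i) 0 + 1) * Real.exp (-α * t) * ‖v‖ := by
        rw [mul_assoc]
        refine mul_le_mul_of_nonneg_right ?_ (by positivity)
        linarith


def clmAlgHom (R E : Type*) [CommRing R] [TopologicalSpace R] [AddCommGroup E] [Module R E]
    [TopologicalSpace E] [IsTopologicalAddGroup E] [ContinuousConstSMul R E] :
    (E →L[R] E) →ₐ[R] Module.End R E where
  toFun f := f.toLinearMap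
  map_one' := rfl
  map_mul' _ _ := rfl
  map_zero' := rfl
  map_add' _ _ := rfl
  commutes' _ := rfl


lemma matrix_decay {n : ℕ} (M : Matrix (Fin n) (Fin n) ℂ) (hM : ∀ μ ∈ spectrum ℂ M, μ.re < 0) :
    ∃ α : ℝ, 0 < α ∧ ∃ C : ℝ, 0 < C ∧ ∀ (v : EuclideanSpace ℂ (Fin n)) (t : ℝ), 0 ≤ t →
      ‖exp ((t : ℂ) • (Matrix.toEuclideanCLM (𝕜 := ℂ) M :
        EuclideanSpace ℂ (Fin n) →L[ℂ] EuclideanSpace ℂ (Fin n))) v‖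
        ≤ C * Real.exp (-α * t) * ‖v‖ := by
  classical
  set f : EuclideanSpace ℂ (Fin n) →L[ℂ] EuclideanSpace ℂ (Fin n) :=
    Matrix.toEuclideanCLM (𝕜 := ℂ) M with hf
  have hspec : ∀ μ : ℂ, Module.End.HasEigenvalue (f : Module.End ℂ (EuclideanSpace ℂ (Fin n))) μ →
      μ ∈ spectrum ℂ M := by
    intro μ h
    rw [← AlgEquiv.spectrum_eq (Matrix.toEuclideanCLM (𝕜 := ℂ)) M]
    exact AlgHom.spectrum_apply_subset (clmAlgHom ℂ (EuclideanSpace ℂ (Fin n))) _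
      (Module.End.hasEigenvalue_iff_mem_spectrum.mp h)
  set F : Finset ℂ := (Matrix.finite_spectrum M).toFinset with hF
  rcases F.eq_empty_or_nonempty with hFe | hFne
  · refine ⟨1, one_pos, ?_⟩
    have : ∀ μ : ℂ, Module.End.HasEigenvalue
        (f : Module.End ℂ (EuclideanSpace ℂ (Fin n))) μ → μ.re ≤ -(2*1) := by
      intro μ h
      exfalso
      have := hspec μ h
      have : μ ∈ F := by rw [hF, Set.Finite.mem_toFinset]; exact this
      rw [hFe] at this
      exact absurd this (Finset.notMem_empty μ)
    obtain ⟨C, hC, h⟩ := decay_uniform f one_pos this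
    exact ⟨C, hC, h⟩
  · set s : ℝ := F.sup' hFne (fun μ => μ.re) with hs
    have hsneg : s < 0 := by
      obtain ⟨μ, hμF, hμs⟩ := F.exists_mem_eq_sup' hFne (fun μ => μ.re)
      rw [hs, hμs]
      exact hM μ (by rwa [hF, Set.Finite.mem_toFinset] at hμF)
    refine ⟨-s/2, by linarith, ?_⟩
    have hb : ∀ μ : ℂ, Module.End.HasEigenvalue
        (f : Module.End ℂ (EuclideanSpace ℂ (Fin n))) μ → μ.re ≤ -(2*(-s/2)) := by
      intro μ h
      have hμF : μ ∈ F := by rw [hF, Set.Finite.mem_toFinset]; exact hspec μ h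
      have := Finset.le_sup' (fun μ : ℂ => μ.re) hμF
      calc μ.re ≤ s := this
        _ = -(2*(-s/2)) := by ring
    obtain ⟨C, hC, h⟩ := decay_uniform f (by linarith) hb
    exact ⟨C, hC, h⟩



noncomputable def RS : (E →L[ℂ] E) →L[ℝ] (E →L[ℝ] E) :=
  (ContinuousLinearMap.restrictScalarsIsometry ℂ E E ℝ ℝ).toContinuousLinearMap

@[simp] lemma RS_apply (g : E →L[ℂ] E) (v : E) : RS g v = g v := rfl

lemma var_of_const (f : E →L[ℂ] E) (y vv : ℝ → E) (hvv : Continuous vv)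
    (hy : ∀ s, HasDerivAt y (f (y s) + vv s) s) (t : ℝ) :
    y t = exp ((t : ℂ) • f) (y 0)
      + ∫ s in (0:ℝ)..t, exp (((t - s : ℝ) : ℂ) • f) (vv s) := by
  set A : ℝ → (E →L[ℝ] E) := fun s => RS (exp ((s : ℂ) • f)) with hA
  have hAd : ∀ s : ℝ, HasDerivAt A (RS (exp ((s : ℂ) • f) * f)) s := by
    intro s
    have h1 : HasDerivAt (fun u : ℂ => exp (u • f)) (exp ((s : ℂ) • f) * f) (s : ℂ) :=
      hasDerivAt_exp_smul_const f (s : ℂ)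
    have h2 : HasDerivAt (fun u : ℝ => exp ((u : ℂ) • f)) (exp ((s : ℂ) • f) * f) s := by
      have := HasDerivAt.scomp (𝕜 := ℝ) (𝕜' := ℂ) s h1 Complex.ofRealCLM.hasDerivAt
      simpa [Function.comp_def] using this
    exact (RS.hasFDerivAt.comp_hasDerivAt s h2 : )
  set An : ℝ → (E →L[ℝ] E) := fun s => A (-s) with hAn
  have hAnd : ∀ s : ℝ, HasDerivAt An (-(RS (exp ((-s : ℂ) • f) * f))) s := by
    intro s
    have hneg : HasDerivAt (fun u : ℝ => -u) (-1) s := (hasDerivAt_id s).neg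
    have := (hAd (-s)).scomp s hneg
    simpa [Function.comp_def] using this
  set G : ℝ → E := fun s => An s (y s) with hG
  have hGd : ∀ s : ℝ, HasDerivAt G (An s (vv s)) s := by
    intro s
    have h := (hAnd s).clm_apply (hy s)
    convert h using 1
    simp only [hAn, hA, RS_apply, ContinuousLinearMap.neg_apply, ContinuousLinearMap.mul_apply,
      map_add, Complex.ofReal_neg]
    abel
  -- continuity facts
  have hexpc : Continuous fun s : ℝ => exp ((s : ℂ) • f) :=
    exp_continuous.comp (Complex.continuous_ofReal.smul continuous_const)
  have hAc : Continuous A := RS.continuous.comp hexpc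
  have hAnc : Continuous An := hAc.comp continuous_neg
  have hGdc : Continuous fun s => An s (vv s) := hAnc.clm_apply hvv
  have hInt : IntervalIntegrable (fun s => An s (vv s)) MeasureTheory.volume 0 t :=
    hGdc.intervalIntegrable 0 t
  have heq : ∫ s in (0:ℝ)..t, An s (vv s) = G t - G 0 :=
    intervalIntegral.integral_eq_sub_of_hasDerivAt (fun s _ => hGd s) hInt
  -- exp (t) * exp (-t) = 1
  have hcomm : ∀ a b : ℂ, Commute (a • f) (b • f) :=
    fun a b => ((Commute.refl f).smul_right b).smul_left a
  have hmulexp : ∀ a b : ℂ, exp (a • f) * exp (b • f) = exp ((a + b) • f) := by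
    intro a b
    rw [← exp_add_of_commute (hcomm a b), add_smul]
  have hGt : exp ((t : ℂ) • f) (G t) = y t := by
    simp only [hG, hAn, hA, RS_apply]
    rw [← ContinuousLinearMap.mul_apply, Complex.ofReal_neg, hmulexp]
    simp [exp_zero]
  have hG0 : G 0 = y 0 := by
    simp [hG, hAn, hA, exp_zero]
  have hyt : y t = exp ((t : ℂ) • f) (G 0) + exp ((t : ℂ) • f) (∫ s in (0:ℝ)..t, An s (vv s)) := by
    rw [heq, map_sub, hGt]
    abel
  rw [hyt, hG0]
  congr 1
  rw [← ContinuousLinearMap.intervalIntegral_comp_comm _ hInt]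
  refine intervalIntegral.integral_congr fun s _ => ?_
  simp only [hAn, hA, RS_apply]
  rw [← ContinuousLinearMap.mul_apply, Complex.ofReal_neg, hmulexp]
  congr 2
  push_cast
  ring



noncomputable def cplxL (n : ℕ) : EuclideanSpace ℝ (Fin n) →ₗ[ℝ] EuclideanSpace ℂ (Fin n) where
  toFun v := (WithLp.equiv 2 (Fin n → ℂ)).symm (fun i => ((WithLp.equiv 2 (Fin n → ℝ)) v i : ℂ))
  map_add' v w := by
    apply (WithLp.equiv 2 (Fin n → ℂ)).injective
    funext i
    simp
  map_smul' c v := by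
    apply (WithLp.equiv 2 (Fin n → ℂ)).injective
    funext i
    simp [Complex.ofReal_mul, Complex.real_smul]

lemma cplxL_norm {n : ℕ} (v : EuclideanSpace ℝ (Fin n)) : ‖cplxL n v‖ = ‖v‖ := by
  rw [EuclideanSpace.norm_eq, EuclideanSpace.norm_eq]
  congr 1
  refine Finset.sum_congr rfl fun i _ => ?_
  simp [cplxL]

-- intertwining
lemma cplxL_comm {n : ℕ} (A : Matrix (Fin n) (Fin n) ℝ) (v : EuclideanSpace ℝ (Fin n)) :
    Matrix.toEuclideanCLM (𝕜 := ℂ) (A.map (algebraMap ℝ ℂ)) (cplxL n v)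
      = cplxL n (Matrix.toEuclideanLin A v) := by
  apply (WithLp.equiv 2 (Fin n → ℂ)).injective
  funext i
  simp [cplxL, Matrix.mulVec, dotProduct, WithLp.equiv]


lemma toEL_mul {p q r : ℕ} (A : Matrix (Fin p) (Fin q) ℝ) (B : Matrix (Fin q) (Fin r) ℝ)
    (x : EuclideanSpace ℝ (Fin r)) :
    Matrix.toEuclideanLin (A * B) x = Matrix.toEuclideanLin A (Matrix.toEuclideanLin B x) := by
  apply (WithLp.equiv 2 (Fin p → ℝ)).injective
  simp [Matrix.mulVec_mulVec]

end FormationAux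
set_option maxHeartbeats 1000000 in
/-- Two-object formation criterion: if `A₂ + B₂S` is Hurwitz, `B₂N = A₁ - A₂` and
`B₂k̃ = A₂d`, then the affine feedback `u₂ = Sx₂ + (N - S)x₁ + (k̃ + Sd)` makes the error
`z(t) = x₂(t) - x₁(t) + d` satisfy
`‖z(t)‖ ≤ C e^{-αt} ‖z(0)‖ + β sup_{τ∈[0,t]} ‖u₁(τ)‖` for every continuous leader
control `u₁` and all initial conditions. -/
theorem stmt_13 (n m : ℕ) (A1 A2 : Matrix (Fin n) (Fin n) ℝ)
    (B1 B2 : Matrix (Fin n) (Fin m) ℝ) (d : EuclideanSpace ℝ (Fin n))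
    (S N : Matrix (Fin m) (Fin n) ℝ) (ktil : EuclideanSpace ℝ (Fin m))
    (hS : ∀ μ ∈ spectrum ℂ ((A2 + B2 * S).map (algebraMap ℝ ℂ)), μ.re < 0)
    (hN : B2 * N = A1 - A2)
    (hk : Matrix.toEuclideanLin B2 ktil = Matrix.toEuclideanLin A2 d) :
    ∃ C > (0 : ℝ), ∃ α > (0 : ℝ), ∃ β > (0 : ℝ),
      ∀ u1 : ℝ → EuclideanSpace ℝ (Fin m), Continuous u1 →
      ∀ x1 x2 : ℝ → EuclideanSpace ℝ (Fin n),
        (∀ t : ℝ, HasDerivAt x1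
          (Matrix.toEuclideanLin A1 (x1 t) + Matrix.toEuclideanLin B1 (u1 t)) t) →
        (∀ t : ℝ, HasDerivAt x2
          (Matrix.toEuclideanLin A2 (x2 t) +
            Matrix.toEuclideanLin B2
              (Matrix.toEuclideanLin S (x2 t) + Matrix.toEuclideanLin (N - S) (x1 t) +
                (ktil + Matrix.toEuclideanLin S d))) t) →
        ∀ t : ℝ, 0 ≤ t →
          ‖x2 t - x1 t + d‖ ≤
            C * Real.exp (-α * t) * ‖x2 0 - x1 0 + d‖ +
              β * ⨆ τ : Set.Icc (0 : ℝ) t, ‖u1 τ.1‖ := by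
  classical
  set Atil : Matrix (Fin n) (Fin n) ℝ := A2 + B2 * S with hAtil
  set M : Matrix (Fin n) (Fin n) ℂ := Atil.map (algebraMap ℝ ℂ) with hM
  obtain ⟨α, hα, C, hC, hdecay⟩ := matrix_decay M hS
  set fC : EuclideanSpace ℂ (Fin n) →L[ℂ] EuclideanSpace ℂ (Fin n) :=
    Matrix.toEuclideanCLM (𝕜 := ℂ) M with hfC
  set B1L : EuclideanSpace ℝ (Fin m) →L[ℝ] EuclideanSpace ℝ (Fin n) :=
    LinearMap.toContinuousLinearMap (Matrix.toEuclideanLin B1) with hB1L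
  set Bn : ℝ := ‖B1L‖ with hBn
  refine ⟨C, hC, α, hα, C * Bn / α + 1, by positivity, ?_⟩
  intro u1 hu1 x1 x2 hx1 hx2 t ht
  set z : ℝ → EuclideanSpace ℝ (Fin n) := fun s => x2 s - x1 s + d with hz
  set w : ℝ → EuclideanSpace ℝ (Fin n) := fun s => -(Matrix.toEuclideanLin B1 (u1 s)) with hw
  -- the error ODE
  have hzd : ∀ s : ℝ, HasDerivAt z (Matrix.toEuclideanLin Atil (z s) + w s) s := by
    intro s
    have hd := ((hx2 s).sub (hx1 s)).add_const d
    refine hd.congr_deriv ?_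
    symm
    have e1 : Matrix.toEuclideanLin B2 (Matrix.toEuclideanLin S (x2 s))
        = Matrix.toEuclideanLin (B2 * S) (x2 s) := (toEL_mul _ _ _).symm
    have e2 : Matrix.toEuclideanLin B2 (Matrix.toEuclideanLin (N - S) (x1 s))
        = Matrix.toEuclideanLin (B2 * (N - S)) (x1 s) := (toEL_mul _ _ _).symm
    have e3 : Matrix.toEuclideanLin B2 (Matrix.toEuclideanLin S d)
        = Matrix.toEuclideanLin (B2 * S) d := (toEL_mul _ _ _).symm
    have e4 : B2 * (N - S) = A1 - A2 - B2 * S := by rw [Matrix.mul_sub, hN]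
    rw [hz, hw]
    simp only [map_add]
    rw [e1, e2, e3, hk, e4]
    simp only [hAtil, map_add, map_sub, LinearMap.add_apply, LinearMap.sub_apply]
    abel
  -- complexify
  set Jc : EuclideanSpace ℝ (Fin n) →L[ℝ] EuclideanSpace ℂ (Fin n) :=
    LinearMap.toContinuousLinearMap (cplxL n) with hJc
  have hJcapp : ∀ v, Jc v = cplxL n v := fun v => rfl
  set y : ℝ → EuclideanSpace ℂ (Fin n) := fun s => Jc (z s) with hy
  set vv : ℝ → EuclideanSpace ℂ (Fin n) := fun s => Jc (w s) with hvv
  have hyd : ∀ s : ℝ, HasDerivAt y (fC (y s) + vv s) s := by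
    intro s
    have := Jc.hasFDerivAt.comp_hasDerivAt s (hzd s)
    refine this.congr_deriv ?_
    symm
    rw [map_add]
    congr 1
    rw [hJcapp, ← cplxL_comm]
    rfl
  have hwc : Continuous w := by
    have : Continuous fun s => B1L (u1 s) := B1L.continuous.comp hu1
    exact this.neg
  have hvvc : Continuous vv := Jc.continuous.comp hwc
  have hsol := var_of_const fC y vv hvvc hyd t
  -- sup bound on u1
  set U : ℝ := ⨆ τ : Set.Icc (0 : ℝ) t, ‖u1 τ.1‖ with hU
  have hU0 : 0 ≤ U := Real.iSup_nonneg fun τ => norm_nonneg _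
  have hbdd : BddAbove (Set.range fun τ : Set.Icc (0:ℝ) t => ‖u1 τ.1‖) := by
    have himg : BddAbove ((fun s => ‖u1 s‖) '' Set.Icc (0:ℝ) t) :=
      (isCompact_Icc.image hu1.norm).bddAbove
    have hrange : (Set.range fun τ : Set.Icc (0:ℝ) t => ‖u1 τ.1‖)
        = (fun s => ‖u1 s‖) '' Set.Icc (0:ℝ) t := by
      ext r
      constructor
      · rintro ⟨⟨s, hs⟩, rfl⟩; exact ⟨s, hs, rfl⟩
      · rintro ⟨s, hs, rfl⟩; exact ⟨⟨s, hs⟩, rfl⟩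
    rwa [hrange]
  have hUb : ∀ s ∈ Set.Icc (0:ℝ) t, ‖u1 s‖ ≤ U := fun s hs => le_ciSup hbdd ⟨s, hs⟩
  have hvvb : ∀ s ∈ Set.Icc (0:ℝ) t, ‖vv s‖ ≤ Bn * U := by
    intro s hs
    show ‖Jc (w s)‖ ≤ Bn * U
    rw [hJcapp, cplxL_norm]
    calc ‖w s‖ = ‖-(Matrix.toEuclideanLin B1 (u1 s))‖ := rfl
      _ = ‖Matrix.toEuclideanLin B1 (u1 s)‖ := norm_neg _
      _ = ‖B1L (u1 s)‖ := rfl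
      _ ≤ Bn * ‖u1 s‖ := B1L.le_opNorm (u1 s)
      _ ≤ Bn * U := mul_le_mul_of_nonneg_left (hUb s hs) (norm_nonneg _)
  -- norm estimates
  have hnormy : ‖y t‖ ≤ C * Real.exp (-α * t) * ‖y 0‖ + C * (Bn * U) / α := by
    rw [hsol]
    have hfirst : ‖exp ((t : ℂ) • fC) (y 0)‖ ≤ C * Real.exp (-α * t) * ‖y 0‖ :=
      hdecay (y 0) t ht
    have hIcont : Continuous fun s => exp (((t - s : ℝ) : ℂ) • fC) (vv s) := by
      have h1 : Continuous fun s : ℝ => exp (((t - s : ℝ) : ℂ) • fC) :=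
        exp_continuous.comp ((Complex.continuous_ofReal.comp
          (continuous_const.sub continuous_id)).smul continuous_const)
      exact h1.clm_apply hvvc
    have hgcont : Continuous fun s : ℝ => C * (Bn * U) * Real.exp (-α * (t - s)) := by
      have : Continuous fun s : ℝ => Real.exp (-α * (t - s)) :=
        Real.continuous_exp.comp (continuous_const.mul (continuous_const.sub continuous_id))
      exact continuous_const.mul this
    have hsecond : ‖∫ s in (0:ℝ)..t, exp (((t - s : ℝ) : ℂ) • fC) (vv s)‖
        ≤ C * (Bn * U) / α := by
      calc ‖∫ s in (0:ℝ)..t, exp (((t - s : ℝ) : ℂ) • fC) (vv s)‖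
          ≤ ∫ s in (0:ℝ)..t, ‖exp (((t - s : ℝ) : ℂ) • fC) (vv s)‖ :=
            intervalIntegral.norm_integral_le_integral_norm ht
        _ ≤ ∫ s in (0:ℝ)..t, C * (Bn * U) * Real.exp (-α * (t - s)) := by
            refine intervalIntegral.integral_mono_on ht
              (hIcont.norm.intervalIntegrable 0 t) (hgcont.intervalIntegrable 0 t) ?_
            intro s hs
            have hts : (0:ℝ) ≤ t - s := by
              rcases hs with ⟨hs0, hst⟩; linarith
            calc ‖exp (((t - s : ℝ) : ℂ) • fC) (vv s)‖
                ≤ C * Real.exp (-α * (t - s)) * ‖vv s‖ := hdecay (vv s) (t - s) hts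
              _ ≤ C * Real.exp (-α * (t - s)) * (Bn * U) := by
                  exact mul_le_mul_of_nonneg_left (hvvb s hs) (by positivity)
              _ = C * (Bn * U) * Real.exp (-α * (t - s)) := by ring
        _ = C * (Bn * U) * ∫ s in (0:ℝ)..t, Real.exp (-α * (t - s)) := by
            rw [intervalIntegral.integral_const_mul]
        _ ≤ C * (Bn * U) * (1 / α) := by
            refine mul_le_mul_of_nonneg_left ?_ (by positivity)
            have hFTC : ∫ s in (0:ℝ)..t, Real.exp (-α * (t - s))
                = Real.exp (-α * (t - t)) / α - Real.exp (-α * (t - 0)) / α := by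
              refine intervalIntegral.integral_eq_sub_of_hasDerivAt
                (f := fun s => Real.exp (-α * (t - s)) / α) (fun s _ => ?_) ?_
              · have h1 : HasDerivAt (fun s : ℝ => t - s) (-1) s :=
                  (hasDerivAt_id s).const_sub t
                have h2 : HasDerivAt (fun s : ℝ => -α * (t - s)) (-α * -1) s :=
                  h1.const_mul (-α)
                have h3 := h2.exp
                have h4 := h3.div_const α
                refine h4.congr_deriv ?_
                symm
                field_simp [hα.ne']
              · have hcont : Continuous fun s : ℝ => Real.exp (-α * (t - s)) := by fun_prop
                exact hcont.intervalIntegrable 0 t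
            rw [hFTC]
            have h7 : Real.exp (-α * (t - t)) / α = 1 / α := by norm_num
            have h6 : 0 ≤ Real.exp (-α * (t - 0)) / α := by positivity
            rw [h7]
            linarith
        _ = C * (Bn * U) / α := by ring
    calc ‖exp ((t : ℂ) • fC) (y 0) + ∫ s in (0:ℝ)..t, exp (((t - s : ℝ) : ℂ) • fC) (vv s)‖
        ≤ ‖exp ((t : ℂ) • fC) (y 0)‖
          + ‖∫ s in (0:ℝ)..t, exp (((t - s : ℝ) : ℂ) • fC) (vv s)‖ := norm_add_le _ _
      _ ≤ C * Real.exp (-α * t) * ‖y 0‖ + C * (Bn * U) / α := add_le_add hfirst hsecond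
  have hyz : ∀ s, ‖y s‖ = ‖z s‖ := by
    intro s
    show ‖Jc (z s)‖ = ‖z s‖
    rw [hJcapp, cplxL_norm]
  have hfinal : ‖z t‖ ≤ C * Real.exp (-α * t) * ‖z 0‖ + (C * Bn / α + 1) * U := by
    have h1 : C * (Bn * U) / α ≤ (C * Bn / α + 1) * U := by
      have : C * (Bn * U) / α = (C * Bn / α) * U := by ring
      rw [this]
      nlinarith
    calc ‖z t‖ = ‖y t‖ := (hyz t).symm
      _ ≤ C * Real.exp (-α * t) * ‖y 0‖ + C * (Bn * U) / α := hnormy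
      _ = C * Real.exp (-α * t) * ‖z 0‖ + C * (Bn * U) / α := by rw [hyz 0]
      _ ≤ C * Real.exp (-α * t) * ‖z 0‖ + (C * Bn / α + 1) * U := by linarith
  exact hfinal
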